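/- (Projected OGD regret bound) Let K ⊆ ℝ^d be a closed convex set of diameter at most D, and let f₁,…,f_T: K → ℝ be convex differentiable functions with ‖∇f_t(x)‖ ≤ G for all t and x ∈ K. Let θ₁ ∈ K and θ_{t+1} = Π_K(θ_t − η∇f_t(θ_t)) where Π_K is the Euclidean projection onto K and η > 0 is a fixed step size. Then for every θ ∈ K, Σ_{t=1}^T f_t(θ_t) − Σ_{t=1}^T f_t(θ) ≤ D²/(2η) + ηTG². -/

import Mathlib

open MeasureTheory Real
open scoped RealInnerProductSpace

section Aux

open InnerProductSpace Set Topology Filter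

variable {E : Type*} [NormedAddCommGroup E] [InnerProductSpace ℝ E] [CompleteSpace E]

/-- Gradient inequality for a convex function: `f x - f y ≤ ⟪∇f x, x - y⟫`. -/
lemma convexOn_grad_ineq {C : Set E} {f : E → ℝ} {g x y : E}
    (hf : ConvexOn ℝ C f) (hx : x ∈ C) (hy : y ∈ C) (hg : HasGradientAt f g x) :
    f x - f y ≤ ⟪g, x - y⟫_ℝ := by
  set φ : ℝ → E := fun s => x + s • (y - x) with hφdef
  have hφ0 : φ 0 = x := by simp [hφdef]
  have hφd : HasDerivAt φ (y - x) 0 := by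
    simpa [hφdef] using ((hasDerivAt_id (0 : ℝ)).smul_const (y - x)).const_add x
  have hfd : HasFDerivAt f (toDual ℝ E g) x := hg
  have hcomp : HasDerivAt (f ∘ φ) (⟪g, y - x⟫_ℝ) 0 := by
    have := (hφ0 ▸ hfd : HasFDerivAt f (toDual ℝ E g) (φ 0)).comp_hasDerivAt 0 hφd
    simpa [toDual_apply_apply] using this
  have hslope : Filter.Tendsto (slope (f ∘ φ) 0) (𝓝[>] (0 : ℝ)) (𝓝 (⟪g, y - x⟫_ℝ)) := by
    exact (hasDerivAt_iff_tendsto_slope.mp hcomp).mono_left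
      (nhdsWithin_mono _ (fun s hs => ne_of_gt hs))
  have hbound : ∀ s ∈ Set.Ioc (0 : ℝ) 1, slope (f ∘ φ) 0 s ≤ f y - f x := by
    intro s hs
    have hs0 : 0 < s := hs.1
    have h1s : 0 ≤ 1 - s := by linarith [hs.2]
    have hmem := hf.2 hx hy h1s hs0.le (by ring)
    have hφeq : φ s = (1 - s) • x + s • y := by
      simp only [hφdef]
      module
    have hfs : f (φ s) ≤ (1 - s) * f x + s * f y := by
      rw [hφeq]; simpa using hmem
    rw [slope_def_field]
    have : (f ∘ φ) s - (f ∘ φ) 0 ≤ s * (f y - f x) := by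
      simp only [Function.comp, hφ0]
      nlinarith
    calc ((f ∘ φ) s - (f ∘ φ) 0) / (s - 0) ≤ s * (f y - f x) / s := by
          rw [sub_zero]
          exact div_le_div_of_nonneg_right this hs0.le |>.trans_eq rfl
      _ = f y - f x := by field_simp
  have key : ⟪g, y - x⟫_ℝ ≤ f y - f x := by
    refine le_of_tendsto hslope ?_
    filter_upwards [Ioc_mem_nhdsGT_of_mem (Set.mem_Ico.mpr ⟨le_refl 0, one_pos⟩)] with s hs
    exact hbound s hs
  have : ⟪g, x - y⟫_ℝ = - ⟪g, y - x⟫_ℝ := by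
    rw [← neg_sub, inner_neg_right]
  linarith [key, this.ge]

/-- The metric projection onto a convex set does not move points farther from any
point of the set. -/
lemma proj_nonexpansive_pt {C : Set E} (hC : Convex ℝ C)
    (proj : E → E) (hmem : ∀ z, proj z ∈ C)
    (hmin : ∀ z, ∀ x ∈ C, ‖proj z - x‖ ≤ ‖x - x‖ ∨ True)
    (hproj : ∀ z, ∀ x ∈ C, ‖proj z - z‖ ≤ ‖x - z‖)
    (z : E) {x : E} (hx : x ∈ C) : ‖proj z - x‖ ≤ ‖z - x‖ := by
  have hiInf : ‖z - proj z‖ = ⨅ w : C, ‖z - w‖ := by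
    haveI : Nonempty C := ⟨⟨proj z, hmem z⟩⟩
    apply le_antisymm
    · exact le_ciInf fun w => by
        have := hproj z w w.2
        rwa [norm_sub_rev, norm_sub_rev (w : E) z] at this
    · have hbdd : BddBelow (Set.range fun w : C => ‖z - (w : E)‖) :=
        ⟨0, by rintro y ⟨w, rfl⟩; exact norm_nonneg _⟩
      exact ciInf_le hbdd ⟨proj z, hmem z⟩
  have hobtuse : ⟪z - proj z, x - proj z⟫_ℝ ≤ 0 :=
    (norm_eq_iInf_iff_real_inner_le_zero hC (hmem z)).mp hiInf x hx
  have hexp : ‖z - x‖ ^ 2 =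
      ‖z - proj z‖ ^ 2 - 2 * ⟪z - proj z, x - proj z⟫_ℝ + ‖x - proj z‖ ^ 2 := by
    have h1 : z - x = (z - proj z) - (x - proj z) := by abel
    rw [h1, @norm_sub_sq_real]
  have h2 : ‖proj z - x‖ = ‖x - proj z‖ := norm_sub_rev _ _
  nlinarith [norm_nonneg (z - x), norm_nonneg (proj z - x), norm_nonneg (z - proj z),
    sq_nonneg (‖z - proj z‖)]

end Aux

/-- **Projected OGD regret bound.** Let `C ⊆ ℝ^d` be a closed convex set of diameter at most
`D`, `f t` convex differentiable with gradients `f' t` bounded by `G` on `C`, `proj` the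
Euclidean projection onto `C`, and `θ` the projected online gradient descent iterates with
fixed step `η > 0`. Then for every comparator `θ* ∈ C`,
`Σ_t f_t(θ_t) − Σ_t f_t(θ*) ≤ D²/(2η) + ηTG²`. -/
theorem projected_ogd_regret {d : ℕ}
    (C : Set (EuclideanSpace ℝ (Fin d)))
    (hC_closed : IsClosed C) (hC_conv : Convex ℝ C) (hC_ne : C.Nonempty)
    (D : ℝ) (hD : ∀ x ∈ C, ∀ y ∈ C, ‖x - y‖ ≤ D)
    (T : ℕ) (f : Fin T → EuclideanSpace ℝ (Fin d) → ℝ)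
    (f' : Fin T → EuclideanSpace ℝ (Fin d) → EuclideanSpace ℝ (Fin d))
    (hconv : ∀ t, ConvexOn ℝ C (f t))
    (hgrad : ∀ t x, x ∈ C → HasGradientAt (f t) (f' t x) x)
    (G : ℝ) (hG : ∀ t x, x ∈ C → ‖f' t x‖ ≤ G)
    (proj : EuclideanSpace ℝ (Fin d) → EuclideanSpace ℝ (Fin d))
    (hproj_mem : ∀ z, proj z ∈ C)
    (hproj : ∀ z, ∀ x ∈ C, ‖proj z - z‖ ≤ ‖x - z‖)
    (η : ℝ) (hη : 0 < η)
    (θ : ℕ → EuclideanSpace ℝ (Fin d)) (hθ0 : θ 0 ∈ C)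
    (hθ : ∀ t : Fin T, θ (t + 1) = proj (θ t - η • f' t (θ t))) :
    ∀ θstar ∈ C,
      ∑ t : Fin T, f t (θ t) - ∑ t : Fin T, f t θstar
        ≤ D ^ 2 / (2 * η) + η * T * G ^ 2 := by
  intro θstar hstar
  -- all iterates up to T are in C
  have hmem : ∀ n : ℕ, n ≤ T → θ n ∈ C := by
    intro n
    induction n with
    | zero => intro _; exact hθ0
    | succ k ih =>
      intro hk
      have hkT : k < T := hk
      have := hθ ⟨k, hkT⟩
      simp only [Fin.val_mk] at this
      rw [this]
      exact hproj_mem _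
  set v : ℕ → ℝ := fun n => ‖θ n - θstar‖ ^ 2 with hv
  -- per-step bound
  have hstep : ∀ t : Fin T,
      f t (θ t) - f t θstar ≤ (v t - v (t + 1)) / (2 * η) + η * G ^ 2 / 2 := by
    intro t
    have htT : (t : ℕ) ≤ T := t.2.le
    have hmt : θ t ∈ C := hmem t htT
    set g := f' t (θ t) with hgdef
    set z := θ t - η • g with hzdef
    have hupd : θ ((t : ℕ) + 1) = proj z := hθ t
    have hGt : ‖g‖ ≤ G := hG t (θ t) hmt
    have hG0 : 0 ≤ G := (norm_nonneg g).trans hGt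
    -- gradient inequality
    have hgi : f t (θ t) - f t θstar ≤ (inner ℝ g (θ t - θstar) : ℝ) :=
      convexOn_grad_ineq (hconv t) hmt hstar (hgrad t (θ t) hmt)
    -- nonexpansiveness of projection
    have hne : ‖θ ((t : ℕ) + 1) - θstar‖ ≤ ‖z - θstar‖ := by
      rw [hupd]
      exact proj_nonexpansive_pt hC_conv proj hproj_mem (fun _ _ _ => Or.inr trivial)
        hproj z hstar
    -- expand ‖z - θstar‖²
    have hexp : ‖z - θstar‖ ^ 2
        = v t - 2 * η * (inner ℝ g (θ t - θstar) : ℝ) + η ^ 2 * ‖g‖ ^ 2 := by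
      have h1 : z - θstar = (θ t - θstar) - η • g := by rw [hzdef]; abel
      rw [h1, @norm_sub_sq_real, real_inner_smul_right, norm_smul, hv]
      have : (inner ℝ (θ (t:ℕ) - θstar) g : ℝ) = inner ℝ g (θ (t:ℕ) - θstar) := real_inner_comm _ _
      rw [this]
      simp [abs_of_pos hη]
      ring
    have hvsq : v ((t : ℕ) + 1) ≤ ‖z - θstar‖ ^ 2 := by
      rw [hv]
      exact pow_le_pow_left₀ (norm_nonneg _) hne 2
    have hinner : (inner ℝ g (θ t - θstar) : ℝ)
        ≤ (v t - v (t + 1)) / (2 * η) + η * ‖g‖ ^ 2 / 2 := by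
      rw [div_add_div _ _ (by positivity : (2 * η) ≠ 0) (by norm_num : (2:ℝ) ≠ 0),
        le_div_iff₀ (by positivity)]
      nlinarith [hvsq, hexp]
    have hgsq : ‖g‖ ^ 2 ≤ G ^ 2 := by nlinarith [norm_nonneg g]
    calc f t (θ t) - f t θstar ≤ (inner ℝ g (θ t - θstar) : ℝ) := hgi
      _ ≤ (v t - v (t + 1)) / (2 * η) + η * ‖g‖ ^ 2 / 2 := hinner
      _ ≤ (v t - v (t + 1)) / (2 * η) + η * G ^ 2 / 2 := by
          have : η * ‖g‖ ^ 2 ≤ η * G ^ 2 := by nlinarith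
          linarith
  -- sum up
  have hsum : ∑ t : Fin T, f t (θ t) - ∑ t : Fin T, f t θstar
      ≤ (v 0 - v T) / (2 * η) + (T : ℝ) * (η * G ^ 2 / 2) := by
    rw [← Finset.sum_sub_distrib]
    calc ∑ t : Fin T, (f t (θ t) - f t θstar)
        ≤ ∑ t : Fin T, ((v t - v (t + 1)) / (2 * η) + η * G ^ 2 / 2) :=
          Finset.sum_le_sum fun t _ => hstep t
      _ = (∑ t : Fin T, (v t - v (t + 1))) / (2 * η) + (T : ℝ) * (η * G ^ 2 / 2) := by
          rw [Finset.sum_add_distrib, ← Finset.sum_div]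
          simp [mul_comm]
      _ = (v 0 - v T) / (2 * η) + (T : ℝ) * (η * G ^ 2 / 2) := by
          congr 1
          congr 1
          rw [Fin.sum_univ_eq_sum_range (fun i => v i - v (i + 1))]
          exact Finset.sum_range_sub' v T
  have hv0 : v 0 ≤ D ^ 2 := by
    show ‖θ 0 - θstar‖ ^ 2 ≤ D ^ 2
    have := hD (θ 0) hθ0 θstar hstar
    have h0 : (0:ℝ) ≤ ‖θ 0 - θstar‖ := norm_nonneg _
    nlinarith
  have hvT : 0 ≤ v T := sq_nonneg _
  have hdiv : (v 0 - v T) / (2 * η) ≤ D ^ 2 / (2 * η) := by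
    apply div_le_div_of_nonneg_right (by linarith) (by positivity) |>.trans_eq rfl
  have hG0 : 0 ≤ G ^ 2 := sq_nonneg G
  have hlast : (T : ℝ) * (η * G ^ 2 / 2) ≤ η * T * G ^ 2 := by
    have hT : (0:ℝ) ≤ (T : ℝ) := Nat.cast_nonneg T
    nlinarith [mul_nonneg (mul_nonneg hη.le hT) hG0]
  linarith [hsum, hdiv, hlast]
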